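/- arXiv:1701.00903 — 5 statements merged into one kernel-verified Lean document; each statement's English description precedes it below -/
import Mathlib

section
/- The set of seven Allen relations is closed under composition: if r₁ and r₂ are any of the seven Allen relations and I, J, K are intervals such that r₁ holds between I and J and r₂ holds between J and K, then exactly one of the seven Allen relations holds between I and K (in particular, I precedes K). -/
/-- An interval: an ordered pair of reals with lower endpoint strictly below upper. -/
structure Itv where
  lo : ℝ
  hi : ℝ
  lt : lo < hi

/-- The seven Allen interval relations. -/
inductive AllenRel
  | before | meet | overlap | start | contain | finishedBy | equal
  deriving DecidableEq

/-- `holds r I J` : the Allen relation `r` holds between intervals `I` and `J`. -/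
def holds : AllenRel → Itv → Itv → Prop
  | .before,     I, J => I.hi < J.lo
  | .meet,       I, J => I.hi = J.lo
  | .overlap,    I, J => I.lo < J.lo ∧ J.lo < I.hi ∧ I.hi < J.hi
  | .start,      I, J => I.lo = J.lo ∧ I.hi < J.hi
  | .contain,    I, J => I.lo < J.lo ∧ J.hi < I.hi
  | .finishedBy, I, J => I.lo < J.lo ∧ I.hi = J.hi
  | .equal,      I, J => I.lo = J.lo ∧ I.hi = J.hi

/-- `I` precedes `J`. -/
def precedes (I J : Itv) : Prop :=
  I.lo < J.lo ∨ (I.lo = J.lo ∧ I.hi ≤ J.hi)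

/-- Composition of two Allen relations: the set of relations realizable between `I` and `K`
when `r₁` holds between `I` and `J` and `r₂` holds between `J` and `K`. -/
def comp (r₁ r₂ : AllenRel) : Set AllenRel :=
  {s | ∃ I J K : Itv, holds r₁ I J ∧ holds r₂ J K ∧ holds s I K}

/-- Set composition of sets of Allen relations. -/
def setComp (R₁ R₂ : Set AllenRel) : Set AllenRel :=
  ⋃ r₁ ∈ R₁, ⋃ r₂ ∈ R₂, comp r₁ r₂

lemma holds_precedes {r : AllenRel} {I J : Itv} (h : holds r I J) : precedes I J := by
  have := I.lt; have := J.lt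
  cases r <;> simp [holds] at h <;> unfold precedes <;>
    first
      | (left; linarith)
      | (obtain ⟨a, b⟩ := h; first | (left; linarith) | (right; constructor <;> linarith))

lemma precedes_trans {I J K : Itv} (h1 : precedes I J) (h2 : precedes J K) : precedes I K := by
  unfold precedes at *
  rcases h1 with h1 | ⟨e1, l1⟩ <;> rcases h2 with h2 | ⟨e2, l2⟩
  · left; linarith
  · left; linarith
  · left; linarith
  · right; constructor <;> linarith

lemma exists_holds (I K : Itv) (h : precedes I K) : ∃ s, holds s I K := by
  have := I.lt; have := K.lt
  rcases h with h | ⟨e, l⟩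
  · rcases lt_trichotomy I.hi K.lo with a | a | a
    · exact ⟨.before, a⟩
    · exact ⟨.meet, a⟩
    · rcases lt_trichotomy I.hi K.hi with b | b | b
      · exact ⟨.overlap, h, a, b⟩
      · exact ⟨.finishedBy, h, b⟩
      · exact ⟨.contain, h, b⟩
  · rcases lt_or_eq_of_le l with b | b
    · exact ⟨.start, e, b⟩
    · exact ⟨.equal, e, b⟩

lemma holds_unique {s t : AllenRel} {I K : Itv} (hs : holds s I K) (ht : holds t I K) : s = t := by
  have hI := I.lt; have hK := K.lt
  cases s <;> cases t <;> simp only [holds] at hs ht <;>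
    first
      | rfl
      | (exfalso
         try obtain ⟨a1, a2⟩ := hs
         try obtain ⟨a2, a3⟩ := a2
         try obtain ⟨b1, b2⟩ := ht
         try obtain ⟨b2, b3⟩ := b2
         linarith)

/-- Closure of the seven Allen relations under composition: if `r₁` holds between `I` and `J`
and `r₂` holds between `J` and `K`, then exactly one of the seven Allen relations holds
between `I` and `K` (in particular, `I` precedes `K`). -/
theorem allen_comp_closed (r₁ r₂ : AllenRel) (I J K : Itv)
    (h₁ : holds r₁ I J) (h₂ : holds r₂ J K) :
    (∃! s : AllenRel, holds s I K) ∧ precedes I K := by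
  have p1 := holds_precedes h₁
  have p2 := holds_precedes h₂
  have p := precedes_trans p1 p2
  obtain ⟨s, hs⟩ := exists_holds I K p
  exact ⟨⟨s, hs, fun t ht => holds_unique ht hs⟩, p⟩
end

section
/- The composition of 'contain' followed by 'before' is exactly the five relations {before, meet, overlap, contain, finished-by}: comp(contain, before) = {before, meet, overlap, contain, finished-by}, where each of these five relations is realized by some triple of intervals I, J, K with I containing J and J before K. -/
/-- `comp contain before = {before, meet, overlap, contain, finishedBy}`. -/
theorem comp_contain_before :
    comp .contain .before = {.before, .meet, .overlap, .contain, .finishedBy} := by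
  ext s
  constructor
  · rintro ⟨I, J, K, ⟨h1, h2⟩, h3, hs⟩
    have hlo : I.lo < K.lo := h1.trans (J.lt.trans h3)
    cases s with
    | start => exact absurd hs.1 hlo.ne
    | equal => exact absurd hs.1 hlo.ne
    | before => left; rfl
    | meet => right; left; rfl
    | overlap => right; right; left; rfl
    | contain => right; right; right; left; rfl
    | finishedBy => right; right; right; right; rfl
  · intro hs
    have mk : ∀ a b : ℝ, a < b → Itv := fun a b h => ⟨a, b, h⟩
    rcases hs with h | h | h | h | h <;> subst h
    · exact ⟨⟨0, 2.5, by norm_num⟩, ⟨1, 2, by norm_num⟩, ⟨3, 4, by norm_num⟩,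
        ⟨by norm_num, by norm_num⟩, by norm_num [holds], by norm_num [holds]⟩
    · exact ⟨⟨0, 3, by norm_num⟩, ⟨1, 2, by norm_num⟩, ⟨3, 4, by norm_num⟩,
        ⟨by norm_num, by norm_num⟩, by norm_num [holds], by norm_num [holds]⟩
    · exact ⟨⟨0, 3.5, by norm_num⟩, ⟨1, 2, by norm_num⟩, ⟨3, 4, by norm_num⟩,
        ⟨by norm_num, by norm_num⟩, by norm_num [holds], ⟨by norm_num, by norm_num, by norm_num⟩⟩
    · exact ⟨⟨0, 5, by norm_num⟩, ⟨1, 2, by norm_num⟩, ⟨3, 4, by norm_num⟩,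
        ⟨by norm_num, by norm_num⟩, by norm_num [holds], ⟨by norm_num, by norm_num⟩⟩
    · exact ⟨⟨0, 4, by norm_num⟩, ⟨1, 2, by norm_num⟩, ⟨3, 4, by norm_num⟩,
        ⟨by norm_num, by norm_num⟩, by norm_num [holds], ⟨by norm_num, by norm_num⟩⟩
end

section
/- Composition of Allen relations over the reals is exact (strong composition): for Allen relations r₁, r₂, s with s ∈ comp(r₁, r₂), and for ANY intervals I and K such that s holds between I and K, there exists an interval J such that r₁ holds between I and J and r₂ holds between J and K. -/
/- ### Auxiliary machinery -/

private lemma Itv.ext' {I J : Itv} (h1 : I.lo = J.lo) (h2 : I.hi = J.hi) : I = J := by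
  cases I; cases J; simp_all

/-- Affine map through `(x, y)` with slope `s`. -/
private def affine (x y s : ℝ) : ℝ → ℝ := fun t => y + (t - x) * s

private lemma affine_mono {x y s : ℝ} (hs : 0 < s) : StrictMono (affine x y s) := by
  intro a b hab
  simp only [affine]
  nlinarith

private lemma glue_mono {f g : ℝ → ℝ} {c : ℝ} (hf : StrictMono f) (hg : StrictMono g)
    (hfg : f c = g c) : StrictMono (fun t => if t ≤ c then f t else g t) := by
  intro a b hab
  by_cases ha : a ≤ c <;> by_cases hb : b ≤ c <;> simp only [ha, hb, if_true, if_false]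
  · exact hf hab
  · rcases lt_or_eq_of_le ha with h' | h'
    · calc f a < f c := hf h'
        _ = g c := hfg
        _ < g b := hg (lt_of_not_ge hb)
    · rw [h', hfg]; exact hg (lt_of_not_ge hb)
  · exact absurd (hab.trans_le hb).le ha
  · exact hg hab

/-- There is a strictly monotone map of ℝ through any four ordered point pairs. -/
private lemma exists_strictMono_four {x1 x2 x3 x4 y1 y2 y3 y4 : ℝ}
    (hx12 : x1 < x2) (hx23 : x2 < x3) (hx34 : x3 < x4)
    (hy12 : y1 < y2) (hy23 : y2 < y3) (hy34 : y3 < y4) :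
    ∃ f : ℝ → ℝ, StrictMono f ∧ f x1 = y1 ∧ f x2 = y2 ∧ f x3 = y3 ∧ f x4 = y4 := by
  set s1 : ℝ := (y2 - y1) / (x2 - x1) with hs1
  set s2 : ℝ := (y3 - y2) / (x3 - x2) with hs2
  set s3 : ℝ := (y4 - y3) / (x4 - x3) with hs3
  have hs1p : 0 < s1 := div_pos (by linarith) (by linarith)
  have hs2p : 0 < s2 := div_pos (by linarith) (by linarith)
  have hs3p : 0 < s3 := div_pos (by linarith) (by linarith)
  set L1 := affine x1 y1 s1 with hL1
  set L2 := affine x2 y2 s2 with hL2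
  set L3 := affine x3 y3 s3 with hL3
  have e12 : L1 x2 = y2 := by
    simp only [hL1, affine, hs1]
    rw [mul_comm, div_mul_cancel₀ _ (sub_ne_zero.2 (ne_of_gt hx12))]; ring
  have e23 : L2 x3 = y3 := by
    simp only [hL2, affine, hs2]
    rw [mul_comm, div_mul_cancel₀ _ (sub_ne_zero.2 (ne_of_gt hx23))]; ring
  have e22 : L2 x2 = y2 := by simp [hL2, affine]
  have e33 : L3 x3 = y3 := by simp [hL3, affine]
  set g : ℝ → ℝ := fun t => if t ≤ x3 then L2 t else L3 t with hg
  have hgmono : StrictMono g :=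
    glue_mono (affine_mono hs2p) (affine_mono hs3p) (e23.trans e33.symm)
  set f : ℝ → ℝ := fun t => if t ≤ x2 then L1 t else g t with hf
  have hgx2 : g x2 = y2 := by simp only [hg, if_pos hx23.le]; exact e22
  have hfmono : StrictMono f := glue_mono (affine_mono hs1p) hgmono (e12.trans hgx2.symm)
  refine ⟨f, hfmono, ?_, ?_, ?_, ?_⟩
  · simp only [hf, if_pos hx12.le, hL1, affine]; ring
  · simp only [hf, if_pos le_rfl]; exact e12
  · simp only [hf, if_neg (not_le.2 hx23), hg, if_pos le_rfl]; exact e23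
  · simp only [hf, if_neg (not_le.2 (hx23.trans hx34)), hg, if_neg (not_le.2 hx34),
      hL3, affine, hs3]
    rw [mul_comm, div_mul_cancel₀ _ (sub_ne_zero.2 (ne_of_gt hx34))]; ring

/-- Image of an interval under a strictly monotone map. -/
private def Itv.map (f : ℝ → ℝ) (hf : StrictMono f) (I : Itv) : Itv :=
  ⟨f I.lo, f I.hi, hf I.lt⟩

private lemma holds_map {f : ℝ → ℝ} (hf : StrictMono f) (r : AllenRel) {I J : Itv}
    (h : holds r I J) : holds r (I.map f hf) (J.map f hf) := by
  cases r with
  | before => exact hf h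
  | meet => exact congrArg f h
  | overlap => exact ⟨hf h.1, hf h.2.1, hf h.2.2⟩
  | start => exact ⟨congrArg f h.1, hf h.2⟩
  | contain => exact ⟨hf h.1, hf h.2⟩
  | finishedBy => exact ⟨hf h.1, congrArg f h.2⟩
  | equal => exact ⟨congrArg f h.1, congrArg f h.2⟩

private lemma key {f : ℝ → ℝ} (hf : StrictMono f) {r₁ r₂ : AllenRel} {I₀ J₀ K₀ I K : Itv}
    (e1 : f I₀.lo = I.lo) (e2 : f I₀.hi = I.hi) (e3 : f K₀.lo = K.lo) (e4 : f K₀.hi = K.hi)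
    (h1 : holds r₁ I₀ J₀) (h2 : holds r₂ J₀ K₀) :
    ∃ J : Itv, holds r₁ I J ∧ holds r₂ J K := by
  refine ⟨J₀.map f hf, ?_, ?_⟩
  · have hI : I₀.map f hf = I := Itv.ext' e1 e2
    have := holds_map hf r₁ h1
    rwa [hI] at this
  · have hK : K₀.map f hf = K := Itv.ext' e3 e4
    have := holds_map hf r₂ h2
    rwa [hK] at this

/-- Strong (exact) composition over the reals: if `s ∈ comp r₁ r₂` then for ANY intervals
`I`, `K` with `s` holding between them, there is an intermediate interval `J`. -/
theorem allen_strong_composition (r₁ r₂ s : AllenRel) (hs : s ∈ comp r₁ r₂)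
    (I K : Itv) (h : holds s I K) :
    ∃ J : Itv, holds r₁ I J ∧ holds r₂ J K := by
  obtain ⟨I₀, J₀, K₀, h1, h2, h3⟩ := hs
  cases s with
  | before =>
    simp only [holds] at h h3
    obtain ⟨f, hf, e1, e2, e3, e4⟩ :=
      exists_strictMono_four I₀.lt h3 K₀.lt I.lt h K.lt
    exact key hf e1 e2 e3 e4 h1 h2
  | meet =>
    simp only [holds] at h h3
    obtain ⟨f, hf, e1, e2, e4, -⟩ :=
      exists_strictMono_four (x2 := I₀.hi) (x3 := K₀.hi) (x4 := K₀.hi + 1)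
        (y2 := I.hi) (y3 := K.hi) (y4 := K.hi + 1)
        I₀.lt (h3 ▸ K₀.lt) (by linarith) I.lt (h ▸ K.lt) (by linarith)
    exact key hf e1 e2 (by rw [← h3, e2, h]) e4 h1 h2
  | overlap =>
    obtain ⟨ha, hb, hc⟩ := h
    obtain ⟨ha3, hb3, hc3⟩ := h3
    obtain ⟨f, hf, e1, e3, e2, e4⟩ :=
      exists_strictMono_four ha3 hb3 hc3 ha hb hc
    exact key hf e1 e2 e3 e4 h1 h2
  | start =>
    obtain ⟨ha, hb⟩ := h
    obtain ⟨ha3, hb3⟩ := h3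
    obtain ⟨f, hf, e1, e2, e4, -⟩ :=
      exists_strictMono_four (x2 := I₀.hi) (x3 := K₀.hi) (x4 := K₀.hi + 1)
        (y2 := I.hi) (y3 := K.hi) (y4 := K.hi + 1)
        I₀.lt hb3 (by linarith) I.lt hb (by linarith)
    exact key hf e1 e2 (by rw [← ha3, e1, ha]) e4 h1 h2
  | contain =>
    obtain ⟨ha, hb⟩ := h
    obtain ⟨ha3, hb3⟩ := h3
    obtain ⟨f, hf, e1, e3, e4, e2⟩ :=
      exists_strictMono_four ha3 K₀.lt hb3 ha K.lt hb
    exact key hf e1 e2 e3 e4 h1 h2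
  | finishedBy =>
    obtain ⟨ha, hb⟩ := h
    obtain ⟨ha3, hb3⟩ := h3
    obtain ⟨f, hf, e1, e3, e4, -⟩ :=
      exists_strictMono_four (x2 := K₀.lo) (x3 := K₀.hi) (x4 := K₀.hi + 1)
        (y2 := K.lo) (y3 := K.hi) (y4 := K.hi + 1)
        ha3 K₀.lt (by linarith) ha K.lt (by linarith)
    exact key hf e1 (by rw [hb3, e4, ← hb]) e3 e4 h1 h2
  | equal =>
    obtain ⟨ha, hb⟩ := h
    obtain ⟨ha3, hb3⟩ := h3
    obtain ⟨f, hf, e1, e2, -, -⟩ :=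
      exists_strictMono_four (x2 := I₀.hi) (x3 := I₀.hi + 1) (x4 := I₀.hi + 2)
        (y2 := I.hi) (y3 := I.hi + 1) (y4 := I.hi + 2)
        I₀.lt (by linarith) (by linarith) I.lt (by linarith) (by linarith)
    exact key hf e1 e2 (by rw [← ha3, e1, ha]) (by rw [← hb3, e2, hb]) h1 h2
end

section
/- (Path consistency) Let n ≥ 2 and suppose an Allen relation r_{i,j} is assigned to every pair of indices 1 ≤ i < j ≤ n such that for all i < j < k one has r_{i,k} ∈ comp(r_{i,j}, r_{j,k}). Then for every strictly increasing sequence of indices n₀ < n₁ < ⋯ < n_m (m ≥ 1) in {1, …, n}, one has r_{n₀,n_m} ∈ {r_{n₀,n₁}} ∘ {r_{n₁,n₂}} ∘ ⋯ ∘ {r_{n_{m−1},n_m}}, where ∘ denotes set composition of sets of Allen relations applied left-associatively. -/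
/-- Left-associative composite `{r 1} ∘ {r 2} ∘ ⋯ ∘ {r m}` of a sequence of Allen
relations (indexed from 1). -/
def pathComp (r : ℕ → AllenRel) : ℕ → Set AllenRel
  | 0 => ∅
  | 1 => {r 1}
  | (m + 2) => setComp (pathComp r (m + 1)) {r (m + 2)}

/-- Path consistency: if every triangle is consistent, then every increasing path is
consistent. -/
theorem path_consistency (n : ℕ) (hn : 2 ≤ n) (r : ℕ → ℕ → AllenRel)
    (hcons : ∀ i j k, 1 ≤ i → i < j → j < k → k ≤ n → r i k ∈ comp (r i j) (r j k))
    (m : ℕ) (hm : 1 ≤ m) (ns : ℕ → ℕ)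
    (hmono : ∀ a b, a < b → b ≤ m → ns a < ns b)
    (hlo : 1 ≤ ns 0) (hhi : ns m ≤ n) :
    r (ns 0) (ns m) ∈ pathComp (fun j => r (ns (j - 1)) (ns j)) m := by
  have key : ∀ m', 1 ≤ m' → m' ≤ m →
      r (ns 0) (ns m') ∈ pathComp (fun j => r (ns (j - 1)) (ns j)) m' := by
    intro m' h1
    induction m', h1 using Nat.le_induction with
    | base => intro _; simp [pathComp]
    | succ k hk ih =>
      intro h2
      have hkm : k ≤ m := le_trans (Nat.le_succ k) h2
      have ihk := ih hkm
      have hmem : r (ns 0) (ns (k + 1)) ∈ comp (r (ns 0) (ns k)) (r (ns k) (ns (k + 1))) := by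
        apply hcons
        · exact hlo
        · exact hmono 0 k hk hkm
        · exact hmono k (k + 1) (Nat.lt_succ_self k) h2
        · rcases eq_or_lt_of_le h2 with h | h
          · rw [h]; exact hhi
          · exact le_of_lt (lt_of_lt_of_le (hmono (k + 1) m h le_rfl) hhi)
      obtain ⟨k', rfl⟩ : ∃ k', k = k' + 1 := ⟨k - 1, (Nat.succ_pred_eq_of_pos hk).symm⟩
      show r (ns 0) (ns (k' + 2)) ∈ setComp _ _
      simp only [setComp, Set.mem_iUnion]
      exact ⟨r (ns 0) (ns (k' + 1)), ihk, r (ns (k' + 1)) (ns (k' + 2)), rfl, by simpa using hmem⟩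
  exact key m hm le_rfl
end

section
/- (Dirichlet normalization used in the Gibbs-sampling marginalization) Let n ≥ 1, let a : Fin n → ℝ with a_i > 0 for all i, and let a₀ > 0. Then the Lebesgue integral over the open simplex Δ = {x : Fin n → ℝ | x_i > 0 for all i and ∑_i x_i < 1} of the function x ↦ (∏_i x_i^{a_i − 1}) · (1 − ∑_i x_i)^{a₀ − 1} equals (∏_i Γ(a_i)) · Γ(a₀) / Γ(a₀ + ∑_i a_i). -/
open MeasureTheory Set
open scoped ENNReal

noncomputable def rbeta (u v : ℝ) : ℝ := Real.Gamma u * Real.Gamma v / Real.Gamma (u + v)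

lemma rbeta_eq (u v : ℝ) (hu : 0 < u) (hv : 0 < v) :
    Complex.betaIntegral u v = (rbeta u v : ℂ) := by
  have h := Complex.Gamma_mul_Gamma_eq_betaIntegral (s := (u:ℂ)) (t := (v:ℂ)) (by simpa) (by simpa)
  have hne : Complex.Gamma ((u:ℂ) + v) ≠ 0 := by
    rw [show ((u:ℂ) + v) = ((u + v : ℝ) : ℂ) by push_cast; ring, Complex.Gamma_ofReal]
    exact_mod_cast (Real.Gamma_pos_of_pos (by positivity)).ne'
  rw [show ((u:ℂ) + v) = ((u + v : ℝ) : ℂ) by push_cast; ring] at h hne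
  rw [Complex.Gamma_ofReal, Complex.Gamma_ofReal, Complex.Gamma_ofReal] at h
  rw [rbeta]
  push_cast
  rw [eq_div_iff (by rwa [Complex.Gamma_ofReal] at hne)]
  linear_combination -h

lemma rbeta_intervalIntegral (u v : ℝ) (hu : 0 < u) (hv : 0 < v) {c : ℝ} (hc : 0 < c) :
    ∫ t in (0:ℝ)..c, t ^ (u - 1) * (c - t) ^ (v - 1) = c ^ (u + v - 1) * rbeta u v := by
  have key : ((∫ t in (0:ℝ)..c, t ^ (u - 1) * (c - t) ^ (v - 1) : ℝ) : ℂ)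
      = ((c ^ (u + v - 1) * rbeta u v : ℝ) : ℂ) := by
    rw [← intervalIntegral.integral_ofReal]
    have : ∀ t ∈ Set.uIcc (0:ℝ) c,
        ((t ^ (u - 1) * (c - t) ^ (v - 1) : ℝ) : ℂ)
        = (t:ℂ) ^ ((u:ℂ) - 1) * ((c:ℝ) - t : ℂ) ^ ((v:ℂ) - 1) := by
      intro t ht
      rw [Set.uIcc_of_le hc.le] at ht
      rw [show ((u:ℂ) - 1) = ((u - 1 : ℝ) : ℂ) by push_cast; ring,
        show ((v:ℂ) - 1) = ((v - 1 : ℝ) : ℂ) by push_cast; ring,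
        ← Complex.ofReal_sub,
        ← Complex.ofReal_cpow ht.1, ← Complex.ofReal_cpow (by linarith [ht.2]),
        ← Complex.ofReal_mul]
    rw [intervalIntegral.integral_congr this]
    rw [Complex.betaIntegral_scaled (u:ℂ) (v:ℂ) hc, rbeta_eq u v hu hv]
    rw [show ((u:ℂ) + v - 1) = ((u + v - 1 : ℝ) : ℂ) by push_cast; ring,
      ← Complex.ofReal_cpow hc.le]
    push_cast
    ring
  exact_mod_cast key

lemma rbeta_intervalIntegrable01 {u v : ℝ} (hu : 0 < u) (hv : 0 < v) :
    IntervalIntegrable (fun t : ℝ => t ^ (u - 1) * (1 - t) ^ (v - 1)) volume 0 1 := by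
  have hC := Complex.betaIntegral_convergent (u := (u:ℂ)) (v := (v:ℂ)) (by simpa) (by simpa)
  have hre : IntervalIntegrable
      (fun x : ℝ => ((x:ℂ) ^ ((u:ℂ) - 1) * ((1:ℂ) - x) ^ ((v:ℂ) - 1)).re) volume 0 1 :=
    ⟨hC.1.re, hC.2.re⟩
  apply hre.congr
  rw [Set.uIoc_of_le (by norm_num : (0:ℝ) ≤ 1)]
  intro x hx
  dsimp only
  rw [show ((u:ℂ) - 1) = ((u - 1 : ℝ) : ℂ) by push_cast; ring,
    show ((v:ℂ) - 1) = ((v - 1 : ℝ) : ℂ) by push_cast; ring,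
    show ((1:ℂ) - x) = ((1 - x : ℝ) : ℂ) by push_cast; ring,
    ← Complex.ofReal_cpow hx.1.le, ← Complex.ofReal_cpow (by linarith [hx.2]),
    ← Complex.ofReal_mul, Complex.ofReal_re]

lemma rbeta_integrableOn {u v c : ℝ} (hu : 0 < u) (hv : 0 < v) (hc : 0 < c) :
    IntegrableOn (fun t : ℝ => t ^ (u - 1) * (c - t) ^ (v - 1)) (Set.Ioo 0 c) := by
  have hg := rbeta_intervalIntegrable01 hu hv
  have h2 := hg.comp_mul_left (c := c⁻¹)
  rw [zero_div, one_div, inv_inv] at h2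
  have h3 : IntervalIntegrable
      (fun x : ℝ => c ^ (u + v - 2) * ((c⁻¹ * x) ^ (u - 1) * (1 - c⁻¹ * x) ^ (v - 1)))
      volume 0 c := h2.const_mul _
  have h4 : IntegrableOn
      (fun x : ℝ => c ^ (u + v - 2) * ((c⁻¹ * x) ^ (u - 1) * (1 - c⁻¹ * x) ^ (v - 1)))
      (Set.Ioo 0 c) := (h3.1).mono_set Set.Ioo_subset_Ioc_self
  apply h4.congr_fun _ measurableSet_Ioo
  intro t ht
  have h1 : (c⁻¹ * t) ^ (u - 1) = c ^ (1 - u) * t ^ (u - 1) := by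
    rw [Real.mul_rpow (by positivity) ht.1.le, Real.inv_rpow hc.le,
      ← Real.rpow_neg hc.le, neg_sub]
  have h2' : (1 - c⁻¹ * t) ^ (v - 1) = c ^ (1 - v) * (c - t) ^ (v - 1) := by
    have h : 1 - c⁻¹ * t = c⁻¹ * (c - t) := by field_simp
    rw [h, Real.mul_rpow (by positivity) (by linarith [ht.2]), Real.inv_rpow hc.le,
      ← Real.rpow_neg hc.le, neg_sub]
  simp only [h1, h2']
  rw [show c ^ (u + v - 2) * (c ^ (1 - u) * t ^ (u - 1) * (c ^ (1 - v) * (c - t) ^ (v - 1)))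
      = c ^ (u + v - 2) * c ^ (1 - u) * c ^ (1 - v) * (t ^ (u - 1) * (c - t) ^ (v - 1)) by ring,
    ← Real.rpow_add hc, ← Real.rpow_add hc, show u + v - 2 + (1 - u) + (1 - v) = 0 by ring,
    Real.rpow_zero, one_mul]

lemma rbeta_pos {u v : ℝ} (hu : 0 < u) (hv : 0 < v) : 0 < rbeta u v :=
  div_pos (mul_pos (Real.Gamma_pos_of_pos hu) (Real.Gamma_pos_of_pos hv))
    (Real.Gamma_pos_of_pos (by positivity))

lemma rbeta_lintegral {u v c : ℝ} (hu : 0 < u) (hv : 0 < v) (hc : 0 < c) :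
    ∫⁻ t in Set.Ioo 0 c, ENNReal.ofReal (t ^ (u - 1) * (c - t) ^ (v - 1))
      = ENNReal.ofReal (c ^ (u + v - 1) * rbeta u v) := by
  rw [← ofReal_integral_eq_lintegral_ofReal (rbeta_integrableOn hu hv hc)
    (by filter_upwards [ae_restrict_mem measurableSet_Ioo] with t ht
        exact mul_nonneg (Real.rpow_nonneg ht.1.le _)
          (Real.rpow_nonneg (by linarith [ht.2]) _))]
  rw [← integral_Ioc_eq_integral_Ioo, ← intervalIntegral.integral_of_le hc.le,
    rbeta_intervalIntegral u v hu hv hc]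

lemma simplex_measurableSet (n : ℕ) :
    MeasurableSet {x : Fin n → ℝ | (∀ i, 0 < x i) ∧ ∑ i, x i < 1} := by
  have : {x : Fin n → ℝ | (∀ i, 0 < x i) ∧ ∑ i, x i < 1}
      = (⋂ i, {x : Fin n → ℝ | 0 < x i}) ∩ {x : Fin n → ℝ | ∑ i, x i < 1} := by
    ext x; simp [Set.mem_iInter]
  rw [this]
  exact (MeasurableSet.iInter fun i =>
      measurableSet_lt measurable_const (measurable_pi_apply i)).inter
    (measurableSet_lt (Finset.measurable_sum _ fun i _ => measurable_pi_apply i)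
      measurable_const)

lemma integrand_measurable (n : ℕ) (a : Fin n → ℝ) (a₀ : ℝ) :
    Measurable fun x : Fin n → ℝ =>
      (∏ i, x i ^ (a i - 1)) * (1 - ∑ i, x i) ^ (a₀ - 1) :=
  ((Finset.measurable_prod _ fun i _ => (measurable_pi_apply i).pow_const _).mul
    ((measurable_const.sub
      (Finset.measurable_sum _ fun i _ => measurable_pi_apply i)).pow_const _))

lemma dirichlet_lintegral : ∀ (n : ℕ) (a : Fin n → ℝ), (∀ i, 0 < a i) → ∀ a₀ : ℝ, 0 < a₀ →
    ∫⁻ x in {x : Fin n → ℝ | (∀ i, 0 < x i) ∧ ∑ i, x i < 1},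
        ENNReal.ofReal ((∏ i, x i ^ (a i - 1)) * (1 - ∑ i, x i) ^ (a₀ - 1)) =
      ENNReal.ofReal ((∏ i, Real.Gamma (a i)) * Real.Gamma a₀ / Real.Gamma (a₀ + ∑ i, a i)) := by
  intro n
  induction n with
  | zero =>
    intro a ha a₀ ha₀
    have hset : {x : Fin 0 → ℝ | (∀ i, 0 < x i) ∧ ∑ i, x i < 1} = Set.univ := by
      ext x; simp [Fin.forall_fin_zero_pi]
    have hΓ : Real.Gamma a₀ ≠ 0 := (Real.Gamma_pos_of_pos ha₀).ne'
    simp [hset, Real.one_rpow, hΓ, lintegral_const, volume_pi, Measure.pi_empty_univ]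
  | succ n ih =>
    intro a ha a₀ ha₀
    set S : Set (Fin (n+1) → ℝ) := {x | (∀ i, 0 < x i) ∧ ∑ i, x i < 1} with hS
    set g : (Fin (n+1) → ℝ) → ℝ≥0∞ := fun x =>
      ENNReal.ofReal ((∏ i, x i ^ (a i - 1)) * (1 - ∑ i, x i) ^ (a₀ - 1)) with hg
    have hgm : Measurable g :=
      ENNReal.measurable_ofReal.comp (integrand_measurable (n+1) a a₀)
    have hFm : Measurable (S.indicator g) := hgm.indicator (simplex_measurableSet (n+1))
    rw [← lintegral_indicator (simplex_measurableSet (n+1))]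
    have hmp := (measurePreserving_piFinSuccAbove (fun _ : Fin (n+1) => (volume : Measure ℝ)) 0).symm
    rw [show (volume : Measure (Fin (n+1) → ℝ)) = Measure.pi fun _ => volume from rfl,
      ← hmp.lintegral_comp hFm]
    have hFm' : Measurable fun p : ℝ × (Fin n → ℝ) =>
        S.indicator g ((MeasurableEquiv.piFinSuccAbove (fun _ : Fin (n+1) => ℝ) 0).symm p) :=
      hFm.comp (MeasurableEquiv.measurable _)
    rw [lintegral_prod_symm _ hFm'.aemeasurable]
    have hsymm : ∀ (t : ℝ) (y : Fin n → ℝ),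
        (MeasurableEquiv.piFinSuccAbove (fun _ : Fin (n+1) => ℝ) 0).symm (t, y)
          = Fin.cons t y := by
      intro t y
      simp [MeasurableEquiv.piFinSuccAbove_symm_apply, Fin.insertNthEquiv,
        Fin.insertNth_zero']
    have key_inner : ∀ y : Fin n → ℝ,
        (∫⁻ t : ℝ, S.indicator g (Fin.cons t y))
          = Set.indicator {z : Fin n → ℝ | (∀ i, 0 < z i) ∧ ∑ i, z i < 1}
              (fun z => ENNReal.ofReal (rbeta (a 0) a₀) *
                ENNReal.ofReal ((∏ i, z i ^ (a i.succ - 1)) *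
                  (1 - ∑ i, z i) ^ ((a₀ + a 0) - 1))) y := by
      intro y
      by_cases hy : y ∈ {z : Fin n → ℝ | (∀ i, 0 < z i) ∧ ∑ i, z i < 1}
      · obtain ⟨hy1, hy2⟩ := mem_setOf.mp hy
        set c : ℝ := 1 - ∑ i, y i with hc
        have hcpos : 0 < c := by simp only [hc]; linarith
        have hmem : ∀ t : ℝ, Fin.cons t y ∈ S ↔ t ∈ Set.Ioo 0 c := by
          intro t
          simp only [hS, mem_setOf_eq, Fin.forall_fin_succ, Fin.cons_zero, Fin.cons_succ,
            Fin.sum_univ_succ, Set.mem_Ioo, hc]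
          constructor
          · rintro ⟨⟨ht, -⟩, hlt⟩; exact ⟨ht, by linarith⟩
          · rintro ⟨ht, hlt⟩; exact ⟨⟨ht, hy1⟩, by linarith⟩
        have h1 : ∀ t : ℝ, S.indicator g (Fin.cons t y)
            = (Set.Ioo 0 c).indicator
                (fun t => ENNReal.ofReal ((∏ i, y i ^ (a i.succ - 1)) *
                  (t ^ (a 0 - 1) * (c - t) ^ (a₀ - 1)))) t := by
          intro t
          by_cases htm : t ∈ Set.Ioo 0 c
          · rw [Set.indicator_of_mem htm, Set.indicator_of_mem ((hmem t).mpr htm)]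
            simp only [hg, Fin.prod_univ_succ, Fin.sum_univ_succ, Fin.cons_zero, Fin.cons_succ]
            congr 1
            rw [show 1 - (t + ∑ i, y i) = c - t by rw [hc]; ring]
            ring
          · rw [Set.indicator_of_notMem htm,
              Set.indicator_of_notMem (fun h => htm ((hmem t).mp h))]
        have hPnn : 0 ≤ ∏ i, y i ^ (a i.succ - 1) :=
          Finset.prod_nonneg fun i _ => Real.rpow_nonneg (hy1 i).le _
        have hmeas1 : Measurable fun t : ℝ =>
            ENNReal.ofReal (t ^ (a 0 - 1) * (c - t) ^ (a₀ - 1)) :=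
          ((measurable_id.pow_const _).mul
            ((measurable_const.sub measurable_id).pow_const _)).ennreal_ofReal
        rw [lintegral_congr h1, lintegral_indicator measurableSet_Ioo]
        simp_rw [ENNReal.ofReal_mul hPnn]
        rw [lintegral_const_mul _ hmeas1, rbeta_lintegral (ha 0) ha₀ hcpos,
          Set.indicator_of_mem hy,
          ← ENNReal.ofReal_mul hPnn, ← ENNReal.ofReal_mul (rbeta_pos (ha 0) ha₀).le]
        congr 1
        rw [show a 0 + a₀ - 1 = a₀ + a 0 - 1 by ring]
        ring
      · rw [Set.indicator_of_notMem hy]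
        have hzero : ∀ t : ℝ, S.indicator g (Fin.cons t y) = 0 := by
          intro t
          apply Set.indicator_of_notMem
          intro hmem
          apply hy
          obtain ⟨h1, h2⟩ := hmem
          have ht0 : 0 < t := by simpa using h1 0
          have hsum : t + ∑ i, y i < 1 := by
            simpa [Fin.sum_univ_succ] using h2
          exact ⟨fun i => by simpa using h1 i.succ, by linarith⟩
        simp [hzero]
    simp_rw [hsymm]
    rw [lintegral_congr key_inner, lintegral_indicator (simplex_measurableSet n),
      lintegral_const_mul _ ((integrand_measurable n (fun i => a i.succ)
        (a₀ + a 0)).ennreal_ofReal),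
      show (Measure.pi fun _ : Fin n => (volume : Measure ℝ)) = volume from rfl,
      ih (fun i => a i.succ) (fun i : Fin n => ha i.succ) (a₀ + a 0) (add_pos ha₀ (ha 0)),
      ← ENNReal.ofReal_mul (rbeta_pos (ha 0) ha₀).le]
    congr 1
    have hΓ1 : Real.Gamma (a 0 + a₀) ≠ 0 := (Real.Gamma_pos_of_pos (add_pos (ha 0) ha₀)).ne'
    have hΓ2 : Real.Gamma (a₀ + a 0 + ∑ i : Fin n, a i.succ) ≠ 0 :=
      (Real.Gamma_pos_of_pos (add_pos_of_pos_of_nonneg (add_pos ha₀ (ha 0))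
        (Finset.sum_nonneg fun (i : Fin n) _ => (ha i.succ).le))).ne'
    rw [Fin.prod_univ_succ, Fin.sum_univ_succ, rbeta,
      show a₀ + (a 0 + ∑ i : Fin n, a i.succ) = a₀ + a 0 + ∑ i : Fin n, a i.succ by ring,
      show a₀ + a 0 = a 0 + a₀ by ring]
    rw [show a 0 + a₀ + ∑ i : Fin n, a i.succ = a₀ + a 0 + ∑ i : Fin n, a i.succ by ring] 
    field_simp

/-- Dirichlet normalization constant: the integral over the open standard simplex of
`(∏ i, x i ^ (a i - 1)) * (1 - ∑ i, x i) ^ (a₀ - 1)` equals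
`(∏ i, Γ (a i)) * Γ a₀ / Γ (a₀ + ∑ i, a i)`. -/
theorem dirichlet_normalization (n : ℕ) (hn : 1 ≤ n)
    (a : Fin n → ℝ) (ha : ∀ i, 0 < a i) (a₀ : ℝ) (ha₀ : 0 < a₀) :
    ∫ x in {x : Fin n → ℝ | (∀ i, 0 < x i) ∧ ∑ i, x i < 1},
        (∏ i, x i ^ (a i - 1)) * (1 - ∑ i, x i) ^ (a₀ - 1) =
      (∏ i, Real.Gamma (a i)) * Real.Gamma a₀ / Real.Gamma (a₀ + ∑ i, a i) := by
  rw [integral_eq_lintegral_of_nonneg_ae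
    (by filter_upwards [ae_restrict_mem (simplex_measurableSet n)] with x hx
        exact mul_nonneg (Finset.prod_nonneg fun i _ => Real.rpow_nonneg (hx.1 i).le _)
          (Real.rpow_nonneg (by linarith [hx.2]) _))
    (integrand_measurable n a a₀).aestronglyMeasurable,
    dirichlet_lintegral n a ha a₀ ha₀, ENNReal.toReal_ofReal]
  exact div_nonneg (mul_nonneg (Finset.prod_nonneg fun i _ =>
      (Real.Gamma_pos_of_pos (ha i)).le) (Real.Gamma_pos_of_pos ha₀).le)
    (Real.Gamma_pos_of_pos (add_pos_of_pos_of_nonneg ha₀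
      (Finset.sum_nonneg fun i _ => (ha i).le))).le
end
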